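/- The tetrahedron index satisfies the linear recursion (Lagrangian equation) q^{e/2} I_Δ(m+1, e)(q) + q^{−m/2} I_Δ(m, e+1)(q) − I_Δ(m,e)(q) = 0 for all integers m, e, as an identity in ℤ((q^{1/2})). -/

import Mathlib

open HahnSeries

/-- `(q;q)_n = ∏_{i=1}^n (1−q^i)` as a power series in the variable `X = q^{1/2}`
(so `q = X²`). -/
noncomputable def qPochhammer' (n : ℕ) : PowerSeries ℤ :=
  ∏ i ∈ Finset.range n, (1 - (PowerSeries.X : PowerSeries ℤ) ^ (2 * (i + 1)))

/-- `1/(q;q)_n` as a formal Laurent series in `q^{1/2}`, with the convention that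
it is `0` for `n < 0`. -/
noncomputable def qPochhammerInv (n : ℤ) : LaurentSeries ℤ :=
  if n < 0 then 0
  else HahnSeries.ofPowerSeries ℤ ℤ (PowerSeries.invOfUnit (qPochhammer' n.toNat) 1)

/-- The `n`-th summand `(−1)^n q^{n(n+1)/2 − (n+e/2)m} / ((q;q)_n (q;q)_{n+e})`
of the tetrahedron index `I_Δ(m,e)(q)`, as a formal Laurent series in `q^{1/2}`:
the exponent of `q^{1/2}` is `n(n+1) − (2n+e)m`. -/
noncomputable def tetraTerm (m e n : ℤ) : LaurentSeries ℤ :=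
  HahnSeries.single (n * (n + 1) - (2 * n + e) * m) ((((-1 : ℤˣ) ^ n : ℤˣ) : ℤ)) *
    qPochhammerInv n * qPochhammerInv (n + e)

noncomputable def Pinv (a : ℕ) : PowerSeries ℤ :=
  PowerSeries.invOfUnit (qPochhammer' a) 1

lemma qPochhammer'_constantCoeff (n : ℕ) :
    PowerSeries.constantCoeff (qPochhammer' n) = 1 := by
  simp [qPochhammer']

lemma Pinv_mul (a : ℕ) : qPochhammer' a * Pinv a = 1 :=
  PowerSeries.mul_invOfUnit _ 1 (by simp [qPochhammer'_constantCoeff])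

lemma qPochhammer'_succ (a : ℕ) :
    qPochhammer' (a + 1) = qPochhammer' a *
      (1 - (PowerSeries.X : PowerSeries ℤ) ^ (2 * (a + 1))) :=
  Finset.prod_range_succ _ _

lemma Pinv_key (a : ℕ) :
    Pinv (a + 1) - Pinv a =
      (PowerSeries.X : PowerSeries ℤ) ^ (2 * (a + 1)) * Pinv (a + 1) := by
  have h1 : qPochhammer' a *
      (Pinv (a + 1) * (1 - (PowerSeries.X : PowerSeries ℤ) ^ (2 * (a + 1)))) = 1 := by
    have h := Pinv_mul (a + 1)
    rw [qPochhammer'_succ] at h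
    linear_combination h
  have h2 : Pinv a = Pinv (a + 1) * (1 - (PowerSeries.X : PowerSeries ℤ) ^ (2 * (a + 1))) := by
    linear_combination (Pinv (a + 1) * (1 - (PowerSeries.X : PowerSeries ℤ) ^ (2 * (a + 1)))) *
      (Pinv_mul a) - Pinv a * h1
  rw [h2]; ring

lemma qPochhammerInv_of_neg {n : ℤ} (h : n < 0) : qPochhammerInv n = 0 :=
  if_pos h

lemma qPochhammerInv_of_nonneg {n : ℤ} (h : 0 ≤ n) :
    qPochhammerInv n = HahnSeries.ofPowerSeries ℤ ℤ (Pinv n.toNat) :=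
  if_neg (not_lt.2 h)

lemma tetra_key (m e n : ℤ) :
    single e (1:ℤ) * tetraTerm (m+1) e (n+1) + single (-m) (1:ℤ) * tetraTerm m (e+1) n
      = tetraTerm m e (n+1) := by
  by_cases hn1 : n + 1 < 0
  · have h1 : qPochhammerInv (n+1) = 0 := qPochhammerInv_of_neg hn1
    have h2 : qPochhammerInv n = 0 := qPochhammerInv_of_neg (by omega)
    simp [tetraTerm, h1, h2]
  by_cases hn : n < 0
  · -- n = -1
    have hne : n = -1 := by omega
    subst hne
    have h2 : qPochhammerInv (-1 : ℤ) = 0 := qPochhammerInv_of_neg (by norm_num)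
    norm_num [tetraTerm, h2]
    rw [← mul_assoc, ← mul_assoc, single_mul_single, one_mul]
    ring_nf
  by_cases he : n + e + 1 < 0
  · have h1 : qPochhammerInv (n + 1 + e) = 0 := qPochhammerInv_of_neg (by omega)
    have h2 : qPochhammerInv (n + (e + 1)) = 0 := qPochhammerInv_of_neg (by omega)
    simp [tetraTerm, h1, h2]
  · -- main case
    obtain ⟨a, hna⟩ : ∃ a : ℕ, n = (a : ℤ) := ⟨n.toNat, by omega⟩
    obtain ⟨b, hnb⟩ : ∃ b : ℕ, n + e + 1 = (b : ℤ) := ⟨(n + e + 1).toNat, by omega⟩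
    have hInv1 : qPochhammerInv (n + 1) = HahnSeries.ofPowerSeries ℤ ℤ (Pinv (a + 1)) := by
      rw [qPochhammerInv_of_nonneg (by omega), show (n + 1).toNat = a + 1 from by omega]
    have hInv2 : qPochhammerInv (n + 1 + e) = HahnSeries.ofPowerSeries ℤ ℤ (Pinv b) := by
      rw [qPochhammerInv_of_nonneg (by omega), show (n + 1 + e).toNat = b from by omega]
    have hInv3 : qPochhammerInv n = HahnSeries.ofPowerSeries ℤ ℤ (Pinv a) := by
      rw [qPochhammerInv_of_nonneg (by omega), show n.toNat = a from by omega]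
    have hInv4 : qPochhammerInv (n + (e + 1)) = HahnSeries.ofPowerSeries ℤ ℤ (Pinv b) := by
      rw [qPochhammerInv_of_nonneg (by omega), show (n + (e + 1)).toNat = b from by omega]
    have hc : ((((-1 : ℤˣ) ^ n : ℤˣ)) : ℤ) = -((((-1 : ℤˣ) ^ (n+1) : ℤˣ)) : ℤ) := by
      rw [zpow_add_one]
      push_cast
      ring
    rw [tetraTerm, tetraTerm, tetraTerm, hInv1, hInv2, hInv3, hInv4, hc]
    simp only [← mul_assoc, single_mul_single, one_mul]
    rw [show e + ((n + 1) * (n + 1 + 1) - (2 * (n + 1) + e) * (m + 1))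
          = (n + 1) * (n + 1 + 1) - (2 * (n + 1) + e) * m - 2 * (n + 1) from by ring,
        show -m + (n * (n + 1) - (2 * n + (e + 1)) * m)
          = (n + 1) * (n + 1 + 1) - (2 * (n + 1) + e) * m - 2 * (n + 1) from by ring]
    have hsingle : (HahnSeries.single ((n + 1) * (n + 1 + 1) - (2 * (n + 1) + e) * m)
          ((((-1 : ℤˣ) ^ (n + 1) : ℤˣ)) : ℤ) : LaurentSeries ℤ)
        = HahnSeries.single ((n + 1) * (n + 1 + 1) - (2 * (n + 1) + e) * m - 2 * (n + 1))
            ((((-1 : ℤˣ) ^ (n + 1) : ℤˣ)) : ℤ) *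
          HahnSeries.ofPowerSeries ℤ ℤ ((PowerSeries.X : PowerSeries ℤ) ^ (2 * (a + 1))) := by
      rw [ofPowerSeries_X_pow, single_mul_single, mul_one,
        show ((2 * (a + 1) : ℕ) : ℤ) = 2 * (n + 1) from by push_cast; omega,
        show (n + 1) * (n + 1 + 1) - (2 * (n + 1) + e) * m - 2 * (n + 1) + 2 * (n + 1)
          = (n + 1) * (n + 1 + 1) - (2 * (n + 1) + e) * m from by ring]
    rw [hsingle]
    have hps : HahnSeries.ofPowerSeries ℤ ℤ (Pinv (a + 1)) -
          HahnSeries.ofPowerSeries ℤ ℤ (Pinv a)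
        = HahnSeries.ofPowerSeries ℤ ℤ ((PowerSeries.X : PowerSeries ℤ) ^ (2 * (a + 1))) *
            HahnSeries.ofPowerSeries ℤ ℤ (Pinv (a + 1)) := by
      rw [← map_mul, ← map_sub]
      exact congrArg _ (Pinv_key a)
    have hv : (HahnSeries.single ((n + 1) * (n + 1 + 1) - (2 * (n + 1) + e) * m - 2 * (n + 1))
          (-((((-1 : ℤˣ) ^ (n + 1) : ℤˣ)) : ℤ)) : LaurentSeries ℤ)
        = -HahnSeries.single ((n + 1) * (n + 1 + 1) - (2 * (n + 1) + e) * m - 2 * (n + 1))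
            ((((-1 : ℤˣ) ^ (n + 1) : ℤˣ)) : ℤ) := by
      ext g
      simp only [HahnSeries.coeff_single, HahnSeries.coeff_neg]
      split <;> simp
    linear_combination
      (HahnSeries.single ((n + 1) * (n + 1 + 1) - (2 * (n + 1) + e) * m - 2 * (n + 1))
          ((((-1 : ℤˣ) ^ (n + 1) : ℤˣ)) : ℤ) * HahnSeries.ofPowerSeries ℤ ℤ (Pinv b)) * hps +
      (HahnSeries.ofPowerSeries ℤ ℤ (Pinv a) * HahnSeries.ofPowerSeries ℤ ℤ (Pinv b)) * hv

lemma ofPS_coeff_neg (f : PowerSeries ℤ) {i : ℤ} (hi : i < 0) :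
    (HahnSeries.ofPowerSeries ℤ ℤ f).coeff i = 0 := by
  rw [show (HahnSeries.ofPowerSeries ℤ ℤ f : LaurentSeries ℤ)
      = ((f : PowerSeries ℤ) : LaurentSeries ℤ) from rfl,
    PowerSeries.coeff_coe, if_pos hi]

lemma single_mul_ofPS_coeff_of_lt (x c : ℤ) (f : PowerSeries ℤ) {d : ℤ} (hd : d < x) :
    (single x c * HahnSeries.ofPowerSeries ℤ ℤ f).coeff d = 0 := by
  have h : d - x + x = d := by ring
  rw [← h, coeff_single_mul_add, ofPS_coeff_neg f (by omega), mul_zero]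

lemma tetra_vanish (m e aa n d : ℤ) (h : d < aa + (n * (n + 1) - (2 * n + e) * m)) :
    (single aa (1 : ℤ) * tetraTerm m e n).coeff d = 0 := by
  rw [tetraTerm]
  by_cases hn : n < 0
  · simp [qPochhammerInv_of_neg hn]
  by_cases he : n + e < 0
  · simp [qPochhammerInv_of_neg he]
  · rw [qPochhammerInv_of_nonneg (by omega), qPochhammerInv_of_nonneg (by omega),
      ← mul_assoc, ← mul_assoc, single_mul_single, one_mul, mul_assoc, ← map_mul]
    exact single_mul_ofPS_coeff_of_lt _ _ _ h

lemma tetra_summable (m e aa d : ℤ) :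
    Summable (fun n : ℤ => (single aa (1 : ℤ) * tetraTerm m e n).coeff d) := by
  set K : ℤ := d - aa + e * m with hK
  set N : ℤ := 2 + |K| + |2 * m - 1| with hN
  apply summable_of_ne_finset_zero (s := Finset.Icc (-N) N)
  intro n hn
  rw [Finset.mem_Icc, not_and_or] at hn
  have hK1 : K ≤ |K| := le_abs_self K
  have hK0 : 0 ≤ |K| := abs_nonneg K
  have hm1 : 2 * m - 1 ≤ |2 * m - 1| := le_abs_self _
  have hm2 : -(2 * m - 1) ≤ |2 * m - 1| := neg_le_abs _
  apply tetra_vanish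
  have hgoal : K < n * (n + 1 - 2 * m) → d < aa + (n * (n + 1) - (2 * n + e) * m) := by
    intro hlt
    nlinarith [hlt]
  apply hgoal
  rcases hn with hn | hn
  · push_neg at hn
    -- n < -N
    have h1 : 0 ≤ -n - 1 := by omega
    have h2 : 0 ≤ -(n + 1 - 2 * m) := by omega
    nlinarith [mul_nonneg h1 h2]
  · push_neg at hn
    -- N < n
    have h1 : 0 ≤ n - 1 := by omega
    have h2 : 0 ≤ n + 1 - 2 * m := by omega
    nlinarith [mul_nonneg h1 h2]


lemma tsum_shift_cancel (F G H : ℤ → ℤ) (hF : Summable F) (hG : Summable G)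
    (hkey : ∀ n : ℤ, H (n + 1) = F (n + 1) + G n) :
    (∑' n : ℤ, F n) + (∑' n : ℤ, G n) - (∑' n : ℤ, H n) = 0 := by
  rw [← Equiv.tsum_eq (Equiv.addRight (1 : ℤ)) F, ← Equiv.tsum_eq (Equiv.addRight (1 : ℤ)) H]
  simp only [Equiv.coe_addRight]
  have hF' : Summable (fun n : ℤ => F (n + 1)) :=
    ((Equiv.addRight (1 : ℤ)).summable_iff).2 hF
  rw [show (∑' n : ℤ, H (n + 1)) = ∑' n : ℤ, (F (n + 1) + G n) from tsum_congr hkey,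
    Summable.tsum_add hF' hG]
  ring

/-- the tetrahedron index satisfies the linear recursion (Lagrangian
equation) `q^{e/2} I_Δ(m+1,e)(q) + q^{−m/2} I_Δ(m,e+1)(q) − I_Δ(m,e)(q) = 0`
as an identity in `ℤ((q^{1/2}))`, i.e. coefficientwise in every degree `d`
(`q^{e/2}` and `q^{−m/2}` are the monomials `single e 1` and `single (−m) 1` in
the variable `q^{1/2}`). -/
theorem tetrahedron_index_lagrangian (m e : ℤ) (d : ℤ) :
    (∑' n : ℤ, (HahnSeries.single e (1 : ℤ) * tetraTerm (m + 1) e n).coeff d) +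
      (∑' n : ℤ, (HahnSeries.single (-m) (1 : ℤ) * tetraTerm m (e + 1) n).coeff d) -
      (∑' n : ℤ, (tetraTerm m e n).coeff d) = 0 := by
  apply tsum_shift_cancel
  · exact tetra_summable (m + 1) e e d
  · exact tetra_summable m (e + 1) (-m) d
  · intro n
    rw [← tetra_key m e n]
    simp [HahnSeries.coeff_add]
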